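/- arXiv:2110.00963 — 3 statements merged into one kernel-verified Lean document; each statement's English description precedes it below -/
import Mathlib

section
/- Let N ≥ 1, let Ω-integrals be taken over ℝ^N with Lebesgue measure, let φ : ℝ^N → ℝ be a continuously differentiable function with compact support which is not identically zero, and let f : ℝ → ℝ be continuous satisfying (f1) and (f2). Then for every p with 1 < p < min(p₀, θ) there exists a real number t_p > 0 such that t_p^{p−1} ∫_{ℝ^N} ‖∇φ(x)‖^p dx = ∫_{ℝ^N} f(t_p·φ(x))·φ(x) dx; that is, the rescaled function t_p·φ lies on the Nehari set of the p-energy functional. -/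
open MeasureTheory Filter Real

open Set in
/-- Gronwall-type growth: if `θ F(u) ≤ F'(u) u` and `F > 0` on `(0,∞)` then
`F(u) ≥ F(1) u^θ` for `u ≥ 1`. -/
lemma nehari_gronwall_rpow (F g : ℝ → ℝ) (θ : ℝ)
    (hd : ∀ u : ℝ, 0 < u → HasDerivAt F (g u) u)
    (h : ∀ u : ℝ, 0 < u → 0 < F u ∧ θ * F u ≤ g u * u) :
    ∀ u : ℝ, 1 ≤ u → F 1 * u ^ θ ≤ F u := by
  intro u hu
  set G : ℝ → ℝ := fun v => F v * v ^ (-θ) with hGdef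
  have hGd : ∀ v : ℝ, 0 < v →
      HasDerivAt G (g v * v ^ (-θ) + F v * (-θ * v ^ (-θ - 1))) v := fun v hv =>
    (hd v hv).mul (Real.hasDerivAt_rpow_const (Or.inl hv.ne'))
  have hmono : MonotoneOn G (Ici 1) := by
    apply monotoneOn_of_deriv_nonneg (convex_Ici 1)
    · intro v hv
      exact ((hGd v (lt_of_lt_of_le one_pos hv)).continuousAt).continuousWithinAt
    · intro v hv
      rw [interior_Ici] at hv
      exact ((hGd v (lt_trans one_pos hv)).differentiableAt).differentiableWithinAt
    · intro v hv
      rw [interior_Ici] at hv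
      have hv0 : (0:ℝ) < v := lt_trans one_pos hv
      rw [(hGd v hv0).deriv]
      have key : v ^ (-θ) = v ^ (-θ - 1) * v := by
        rw [← Real.rpow_add_one hv0.ne' (-θ - 1)]; ring_nf
      have h1 := (h v hv0).1
      have h2 := (h v hv0).2
      have hpow : (0:ℝ) < v ^ (-θ - 1) := Real.rpow_pos_of_pos hv0 _
      have heq : g v * v ^ (-θ) + F v * (-θ * v ^ (-θ - 1))
          = v ^ (-θ - 1) * (g v * v - θ * F v) := by rw [key]; ring
      rw [heq]
      exact mul_nonneg hpow.le (by linarith)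
  have hle : G 1 ≤ G u := hmono self_mem_Ici hu hu
  have h1 : G 1 = F 1 := by simp [hGdef]
  have hu0 : (0:ℝ) < u := lt_of_lt_of_le one_pos hu
  have hupow : (0:ℝ) < u ^ θ := Real.rpow_pos_of_pos hu0 _
  rw [h1, hGdef] at hle
  have := mul_le_mul_of_nonneg_right hle hupow.le
  rwa [mul_assoc, ← Real.rpow_add hu0, neg_add_cancel, Real.rpow_zero, mul_one] at this

set_option maxHeartbeats 2000000 in
/-- For `f` continuous satisfying (f1) and (f2) and a nonzero compactly supported `C¹`
radial-free test function `φ`, for every `1 < p < min p₀ θ` there is `t_p > 0` putting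
`t_p • φ` on the Nehari set of the `p`-energy. -/
theorem nehari_scaling_exists (N : ℕ) (hN : 1 ≤ N)
    (φ : EuclideanSpace ℝ (Fin N) → ℝ)
    (hφ : ContDiff ℝ 1 φ) (hφc : HasCompactSupport φ) (hφ0 : φ ≠ 0)
    (f : ℝ → ℝ) (hf : Continuous f)
    (p₀ : ℝ) (hp₀1 : 1 < p₀) (hp₀2 : p₀ < 2)
    (hf1 : Tendsto (fun t : ℝ => f t / |t| ^ (p₀ - 1)) (nhdsWithin 0 {0}ᶜ) (nhds 0))
    (θ : ℝ) (hθ : 1 < θ)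
    (hf2 : ∀ t : ℝ, t ≠ 0 →
      0 < θ * (∫ s in (0:ℝ)..t, f s) ∧ θ * (∫ s in (0:ℝ)..t, f s) ≤ f t * t)
    (p : ℝ) (hp1 : 1 < p) (hp2 : p < min p₀ θ) :
    ∃ tp : ℝ, 0 < tp ∧
      tp ^ (p - 1) * (∫ x, ‖gradient φ x‖ ^ p) = ∫ x, f (tp * φ x) * φ x := by
  classical
  have hp0 : (0:ℝ) < p := lt_trans one_pos hp1
  have hpp₀ : p < p₀ := lt_of_lt_of_le hp2 (min_le_left _ _)
  have hpθ : p < θ := lt_of_lt_of_le hp2 (min_le_right _ _)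
  have hθ0 : (0:ℝ) < θ := lt_trans one_pos hθ
  -- f 0 = 0
  have hf0 : f 0 = 0 := by
    have habs : Tendsto (fun t : ℝ => |t| ^ (p₀ - 1)) (nhdsWithin 0 {0}ᶜ) (nhds 0) := by
      have hc : Continuous fun t : ℝ => |t| ^ (p₀ - 1) :=
        continuous_abs.rpow_const (fun x => Or.inr (by linarith))
      have := (hc.tendsto 0).mono_left (nhdsWithin_le_nhds (s := ({0}ᶜ : Set ℝ)))
      simpa [Real.zero_rpow (by linarith : p₀ - 1 ≠ 0)] using this
    have heq : ∀ᶠ t in nhdsWithin (0:ℝ) {0}ᶜ,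
        (f t / |t| ^ (p₀ - 1)) * |t| ^ (p₀ - 1) = f t := by
      filter_upwards [self_mem_nhdsWithin] with t ht
      have ht0 : t ≠ 0 := ht
      have : |t| ^ (p₀ - 1) ≠ 0 := (Real.rpow_pos_of_pos (abs_pos.mpr ht0) _).ne'
      field_simp
    have h1 : Tendsto f (nhdsWithin (0:ℝ) {0}ᶜ) (nhds 0) := by
      have := hf1.mul habs
      rw [mul_zero] at this
      exact Tendsto.congr' heq this
    have h2 : Tendsto f (nhdsWithin (0:ℝ) {0}ᶜ) (nhds (f 0)) :=
      (hf.tendsto 0).mono_left nhdsWithin_le_nhds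
    exact tendsto_nhds_unique h2 h1
  -- the primitive F
  set F : ℝ → ℝ := fun t => ∫ s in (0:ℝ)..t, f s with hFdef
  have hF0 : F 0 = 0 := intervalIntegral.integral_same
  have hFd : ∀ u : ℝ, HasDerivAt F (f u) u := fun u =>
    (hf.integral_hasStrictDerivAt 0 u).hasDerivAt
  have hFpos : ∀ t : ℝ, t ≠ 0 → 0 < F t := fun t ht => by
    nlinarith [(hf2 t ht).1]
  -- bound for φ
  obtain ⟨C₀, hC₀⟩ := hφc.exists_bound_of_continuous hφ.continuous
  set C : ℝ := max C₀ 1 with hCdef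
  have hCpos : (0:ℝ) < C := lt_of_lt_of_le one_pos (le_max_right _ _)
  have hCb : ∀ x, |φ x| ≤ C := fun x => le_trans (hC₀ x) (le_max_left _ _)
  set K := tsupport φ with hKdef
  have hK : IsCompact K := hφc
  have hKm : MeasurableSet K := (isClosed_tsupport φ).measurableSet
  set κ := (volume K).toReal with hκdef
  have hκ0 : 0 ≤ κ := ENNReal.toReal_nonneg
  have hindint : ∀ e : ℝ, Integrable (K.indicator fun _ => e) :=
    fun e => (integrable_indicator_iff hKm).mpr
      ((integrableOn_const_iff).mpr (Or.inr hK.measure_lt_top))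
  -- positivity of the gradient term
  set A := ∫ x, ‖gradient φ x‖ ^ p with hAdef
  haveI : Nontrivial (EuclideanSpace ℝ (Fin N)) := by
    refine nontrivial_of_ne (EuclideanSpace.single ⟨0, hN⟩ (1:ℝ)) 0 ?_
    intro h
    have : (EuclideanSpace.single ⟨0, hN⟩ (1:ℝ) : EuclideanSpace ℝ (Fin N)) ⟨0, hN⟩
        = (0 : EuclideanSpace ℝ (Fin N)) ⟨0, hN⟩ := by rw [h]
    rw [EuclideanSpace.single_apply] at this
    simp at this
  have hA : 0 < A := by
    have hgradc : Continuous fun x => gradient φ x := by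
      have h1 : Continuous fun x => fderiv ℝ φ x := hφ.continuous_fderiv one_ne_zero
      exact (InnerProductSpace.toDual ℝ _).symm.continuous.comp h1
    have hgradcs : HasCompactSupport fun x => gradient φ x :=
      (hφc.fderiv (𝕜 := ℝ)).comp_left (by simp)
    have hgcs : HasCompactSupport fun x => ‖gradient φ x‖ ^ p :=
      hgradcs.comp_left (g := fun v => ‖v‖ ^ p) (by simp [Real.zero_rpow hp0.ne'])
    have hgc : Continuous fun x => ‖gradient φ x‖ ^ p :=
      hgradc.norm.rpow_const fun x => Or.inr hp0.le
    obtain ⟨x₀, hx₀⟩ : ∃ x₀, gradient φ x₀ ≠ 0 := by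
      by_contra hcon
      push_neg at hcon
      have hfd : ∀ x, fderiv ℝ φ x = 0 := fun x => by
        have h1 : (InnerProductSpace.toDual ℝ _) (gradient φ x) = fderiv ℝ φ x :=
          (InnerProductSpace.toDual ℝ _).apply_symm_apply _
        rw [← h1, hcon x, map_zero]
      obtain ⟨y, hy⟩ : ∃ y, y ∉ K := by
        by_contra h
        push_neg at h
        exact hK.ne_univ (Set.eq_univ_of_forall h)
      refine hφ0 (funext fun x => ?_)
      rw [is_const_of_fderiv_eq_zero (hφ.differentiable one_ne_zero) hfd x y,
        image_eq_zero_of_notMem_tsupport hy]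
      rfl
    refine hgc.integral_pos_of_hasCompactSupport_nonneg_nonzero hgcs
      (fun x => Real.rpow_nonneg (norm_nonneg _) _) (x := x₀) ?_
    exact (Real.rpow_pos_of_pos (norm_pos_iff.mpr hx₀) p).ne'
  -- the Nehari integral I and its continuity
  set I : ℝ → ℝ := fun t => ∫ x, f (t * φ x) * φ x with hIdef
  have hIint : ∀ t : ℝ, Integrable fun x => f (t * φ x) * φ x := fun t => by
    have hc : Continuous fun x => f (t * φ x) * φ x :=
      (hf.comp (continuous_const.mul hφ.continuous)).mul hφ.continuous
    exact hc.integrable_of_hasCompactSupport (hφc.mul_left)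
  have hIcont : Continuous I := by
    rw [continuous_iff_continuousAt]
    intro t₀
    obtain ⟨M, hM⟩ := (isCompact_Icc (a := -((|t₀| + 1) * C))
      (b := (|t₀| + 1) * C)).exists_bound_of_continuousOn hf.continuousOn
    apply continuousAt_of_dominated (bound := K.indicator fun _ => M * C)
    · filter_upwards with s
      exact ((hf.comp (continuous_const.mul hφ.continuous)).mul
        hφ.continuous).aestronglyMeasurable
    · filter_upwards [Metric.ball_mem_nhds t₀ one_pos] with s hs
      filter_upwards with x
      by_cases hx : x ∈ K
      · rw [Set.indicator_of_mem hx]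
        have h1 : |s| ≤ |t₀| + 1 := by
          have h2 : |s - t₀| < 1 := by simpa [Real.dist_eq] using hs
          calc |s| = |s - t₀ + t₀| := by ring_nf
            _ ≤ |s - t₀| + |t₀| := abs_add_le _ _
            _ ≤ |t₀| + 1 := by linarith
        have h2 : |s * φ x| ≤ (|t₀| + 1) * C := by
          rw [abs_mul]
          exact mul_le_mul h1 (hCb x) (abs_nonneg _) (by positivity)
        have h3 : ‖f (s * φ x)‖ ≤ M := by
          refine hM _ ?_
          rcases abs_le.mp h2 with ⟨hl, hr⟩
          exact ⟨hl, hr⟩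
        calc ‖f (s * φ x) * φ x‖ = ‖f (s * φ x)‖ * |φ x| := abs_mul _ _
          _ ≤ M * C := mul_le_mul h3 (hCb x) (abs_nonneg _)
              (le_trans (norm_nonneg _) h3)
      · rw [Set.indicator_of_notMem hx, image_eq_zero_of_notMem_tsupport hx]
        simp [hf0]
    · exact hindint _
    · filter_upwards with x
      exact (((hf.comp ((continuous_id.mul continuous_const)))).mul
        continuous_const).continuousAt
  -- small-t bound from (f1)
  obtain ⟨δ, hδ0, hδ⟩ := Metric.tendsto_nhdsWithin_nhds.mp hf1 1 one_pos
  have hsmall : ∀ s : ℝ, |s| < δ → |f s| ≤ |s| ^ (p₀ - 1) := by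
    intro s hs
    rcases eq_or_ne s 0 with rfl | hs0
    · simp only [hf0, abs_zero]
      exact Real.rpow_nonneg le_rfl _
    · have h1 := hδ (by exact hs0) (by simpa [Real.dist_eq] using hs)
      rw [Real.dist_eq, sub_zero, abs_div,
        abs_of_nonneg (Real.rpow_nonneg (abs_nonneg s) _)] at h1
      have hpow : (0:ℝ) < |s| ^ (p₀ - 1) := Real.rpow_pos_of_pos (abs_pos.mpr hs0) _
      rw [div_lt_one hpow] at h1
      exact h1.le
  -- choose small t₁ with I t₁ < t₁ ^ (p-1) * A
  obtain ⟨t₁, ht₁A, ht₁mem⟩ : ∃ t₁ : ℝ,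
      t₁ ^ (p₀ - p) * (C ^ (p₀ - 1) * C * κ) < A ∧ t₁ ∈ Set.Ioo 0 (min 1 (δ / C)) := by
    have h1 : ContinuousAt (fun t : ℝ => t ^ (p₀ - p)) 0 :=
      Real.continuousAt_rpow_const 0 _ (Or.inr (by linarith))
    have hDtend : Tendsto (fun t : ℝ => t ^ (p₀ - p) * (C ^ (p₀ - 1) * C * κ))
        (nhdsWithin 0 (Set.Ioi 0)) (nhds 0) := by
      have h2 : Tendsto (fun t : ℝ => t ^ (p₀ - p)) (nhdsWithin (0:ℝ) (Set.Ioi 0))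
          (nhds 0) := by
        have := h1.tendsto.mono_left (nhdsWithin_le_nhds (s := Set.Ioi (0:ℝ)))
        simpa [Real.zero_rpow (by linarith : p₀ - p ≠ 0)] using this
      have h3 := h2.mul_const (C ^ (p₀ - 1) * C * κ)
      rwa [zero_mul] at h3
    have hev1 := hDtend.eventually_lt_const hA
    have hev2 : ∀ᶠ t in nhdsWithin (0:ℝ) (Set.Ioi 0),
        t ∈ Set.Ioo (0:ℝ) (min 1 (δ / C)) :=
      Ioo_mem_nhdsGT_of_mem ⟨le_refl 0, lt_min one_pos (by positivity)⟩
    exact (hev1.and hev2).exists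
  obtain ⟨ht₁pos, ht₁lt⟩ := ht₁mem
  have ht₁1 : t₁ < 1 := lt_of_lt_of_le ht₁lt (min_le_left _ _)
  have ht₁δ : t₁ * C < δ := by
    have := lt_of_lt_of_le ht₁lt (min_le_right _ _)
    exact (lt_div_iff₀ hCpos).mp this
  have hsmallI : I t₁ < t₁ ^ (p - 1) * A := by
    have hb : ∀ x, ‖f (t₁ * φ x) * φ x‖ ≤
        K.indicator (fun _ => (t₁ * C) ^ (p₀ - 1) * C) x := by
      intro x
      by_cases hx : x ∈ K
      · rw [Set.indicator_of_mem hx]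
        have h1 : |t₁ * φ x| ≤ t₁ * C := by
          rw [abs_mul, abs_of_pos ht₁pos]
          exact mul_le_mul_of_nonneg_left (hCb x) ht₁pos.le
        have h2 : |t₁ * φ x| < δ := lt_of_le_of_lt h1 ht₁δ
        have h3 := hsmall _ h2
        have h4 : |t₁ * φ x| ^ (p₀ - 1) ≤ (t₁ * C) ^ (p₀ - 1) :=
          Real.rpow_le_rpow (abs_nonneg _) h1 (by linarith)
        calc ‖f (t₁ * φ x) * φ x‖ = |f (t₁ * φ x)| * |φ x| := abs_mul _ _
          _ ≤ (t₁ * C) ^ (p₀ - 1) * C :=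
            mul_le_mul (h3.trans h4) (hCb x) (abs_nonneg _)
              (Real.rpow_nonneg (by positivity) _)
      · rw [Set.indicator_of_notMem hx, image_eq_zero_of_notMem_tsupport hx]
        simp [hf0]
    have hIb : |I t₁| ≤ κ * ((t₁ * C) ^ (p₀ - 1) * C) := by
      have h5 := norm_integral_le_of_norm_le (hindint ((t₁ * C) ^ (p₀ - 1) * C))
        (Eventually.of_forall hb)
      rwa [integral_indicator_const _ hKm, smul_eq_mul] at h5
    have he1 : (t₁ * C) ^ (p₀ - 1) = t₁ ^ (p₀ - 1) * C ^ (p₀ - 1) :=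
      Real.mul_rpow ht₁pos.le hCpos.le
    have he2 : t₁ ^ (p₀ - 1) = t₁ ^ (p - 1) * t₁ ^ (p₀ - p) := by
      rw [← Real.rpow_add ht₁pos]; ring_nf
    have hkey : κ * ((t₁ * C) ^ (p₀ - 1) * C)
        = t₁ ^ (p - 1) * (t₁ ^ (p₀ - p) * (C ^ (p₀ - 1) * C * κ)) := by
      rw [he1, he2]; ring
    have h6 : I t₁ ≤ t₁ ^ (p - 1) * (t₁ ^ (p₀ - p) * (C ^ (p₀ - 1) * C * κ)) := by
      calc I t₁ ≤ |I t₁| := le_abs_self _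
        _ ≤ κ * ((t₁ * C) ^ (p₀ - 1) * C) := hIb
        _ = _ := hkey
    have h7 : (0:ℝ) < t₁ ^ (p - 1) := Real.rpow_pos_of_pos ht₁pos _
    calc I t₁ ≤ t₁ ^ (p - 1) * (t₁ ^ (p₀ - p) * (C ^ (p₀ - 1) * C * κ)) := h6
      _ < t₁ ^ (p - 1) * A := by
        exact mul_lt_mul_of_pos_left ht₁A h7
  -- large-t lower bound from (f2)
  obtain ⟨x₁, hx₁⟩ : ∃ x, φ x ≠ 0 := by
    by_contra h
    push_neg at h
    exact hφ0 (funext fun x => h x)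
  set a : ℝ := |φ x₁| / 2 with hadef
  have hapos : 0 < a := by
    have := abs_pos.mpr hx₁
    simp only [hadef]
    linarith
  set S := {x | a ≤ |φ x|} with hSdef
  have hSm : MeasurableSet S :=
    (isClosed_le continuous_const hφ.continuous.abs).measurableSet
  have hSK : S ⊆ K := by
    intro x hx
    apply subset_tsupport φ
    intro h0
    have hx' : a ≤ |φ x| := hx
    rw [h0] at hx'
    simp at hx'
    linarith
  set m := (volume S).toReal with hmdef
  have hSfin : volume S < ⊤ := lt_of_le_of_lt (measure_mono hSK) hK.measure_lt_top
  have hm : 0 < m := by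
    have hU : IsOpen {x | a < |φ x|} := isOpen_lt continuous_const hφ.continuous.abs
    have hUne : {x | a < |φ x|}.Nonempty := ⟨x₁, by
      simp only [Set.mem_setOf_eq, hadef]
      have := abs_pos.mpr hx₁
      linarith⟩
    have h1 : 0 < volume {x | a < |φ x|} := hU.measure_pos volume hUne
    have h2 : volume {x | a < |φ x|} ≤ volume S := by
      apply measure_mono
      intro x hx
      have hx' : a < |φ x| := hx
      show a ≤ |φ x|
      exact hx'.le
    have h3 : volume S ≠ 0 := (lt_of_lt_of_le h1 h2).ne'
    exact ENNReal.toReal_pos h3 hSfin.ne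
  have hgrF : ∀ u : ℝ, 1 ≤ u → F 1 * u ^ θ ≤ F u :=
    nehari_gronwall_rpow F f θ (fun u _ => hFd u)
      (fun u hu => ⟨hFpos u hu.ne', (hf2 u hu.ne').2⟩)
  have hgrFneg : ∀ u : ℝ, 1 ≤ u → F (-1) * u ^ θ ≤ F (-u) := by
    apply nehari_gronwall_rpow (fun u => F (-u)) (fun u => -f (-u)) θ
    · intro u hu
      have := (hFd (-u)).comp u (hasDerivAt_neg u)
      simpa [Function.comp_def, mul_comm] using this
    · intro u hu
      refine ⟨hFpos _ (neg_ne_zero.mpr hu.ne'), ?_⟩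
      have h2 := (hf2 (-u) (neg_ne_zero.mpr hu.ne')).2
      nlinarith
  set c : ℝ := min (F 1) (F (-1)) with hcdef
  have hc : 0 < c := lt_min (hFpos 1 one_ne_zero) (hFpos (-1) (by norm_num))
  set Econ : ℝ := θ * (c * a ^ θ) * m with hEdef
  have hapow : (0:ℝ) < a ^ θ := Real.rpow_pos_of_pos hapos _
  have hE : 0 < Econ := by
    apply mul_pos (mul_pos hθ0 (mul_pos hc hapow)) hm
  obtain ⟨t₂, ht₂gt, ht₂ge⟩ : ∃ t₂ : ℝ, A < Econ * t₂ ^ (θ - p) ∧ max 1 (1 / a) ≤ t₂ := by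
    have htend : Tendsto (fun t : ℝ => Econ * t ^ (θ - p)) atTop atTop :=
      (tendsto_rpow_atTop (by linarith)).const_mul_atTop hE
    exact ((htend.eventually_gt_atTop A).and (eventually_ge_atTop _)).exists
  have ht₂1 : (1:ℝ) ≤ t₂ := le_trans (le_max_left _ _) ht₂ge
  have ht₂0 : (0:ℝ) < t₂ := lt_of_lt_of_le one_pos ht₂1
  have hta : (1:ℝ) ≤ t₂ * a := by
    have h1 : 1 / a ≤ t₂ := le_trans (le_max_right _ _) ht₂ge
    rw [div_le_iff₀ hapos] at h1
    linarith [h1]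
  have hbigI : t₂ ^ (p - 1) * A < I t₂ := by
    have hlow : ∀ x, S.indicator (fun _ => θ / t₂ * (c * (t₂ * a) ^ θ)) x
        ≤ f (t₂ * φ x) * φ x := by
      intro x
      by_cases hx : x ∈ S
      · rw [Set.indicator_of_mem hx]
        have hxS : a ≤ |φ x| := hx
        have hφx : φ x ≠ 0 := by
          intro h0
          rw [h0] at hxS
          simp at hxS
          linarith
        have htφ : t₂ * φ x ≠ 0 := mul_ne_zero ht₂0.ne' hφx
        have h2 := (hf2 _ htφ).2
        have hFlow : c * (t₂ * a) ^ θ ≤ F (t₂ * φ x) := by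
          rcases le_or_gt a (φ x) with hcase | hcase
          · have h1 : t₂ * a ≤ t₂ * φ x := mul_le_mul_of_nonneg_left hcase ht₂0.le
            have h4 : (t₂ * a) ^ θ ≤ (t₂ * φ x) ^ θ :=
              Real.rpow_le_rpow (by positivity) h1 hθ0.le
            calc c * (t₂ * a) ^ θ ≤ F 1 * (t₂ * φ x) ^ θ :=
                mul_le_mul (min_le_left _ _) h4 (Real.rpow_nonneg (by positivity) _)
                  (hFpos 1 one_ne_zero).le
              _ ≤ F (t₂ * φ x) := hgrF _ (le_trans hta h1)
          · have hneg : φ x ≤ -a := by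
              rcases abs_cases (φ x) with ⟨he, _⟩ | ⟨he, _⟩
              · rw [he] at hxS; linarith
              · rw [he] at hxS; linarith
            have h1 : t₂ * a ≤ t₂ * (-φ x) :=
              mul_le_mul_of_nonneg_left (by linarith) ht₂0.le
            have h4 : (t₂ * a) ^ θ ≤ (t₂ * (-φ x)) ^ θ :=
              Real.rpow_le_rpow (by positivity) h1 hθ0.le
            have h5 := hgrFneg (t₂ * (-φ x)) (le_trans hta h1)
            have h6 : -(t₂ * (-φ x)) = t₂ * φ x := by ring
            rw [h6] at h5
            calc c * (t₂ * a) ^ θ ≤ F (-1) * (t₂ * (-φ x)) ^ θ :=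
                mul_le_mul (min_le_right _ _) h4 (Real.rpow_nonneg (by positivity) _)
                  (hFpos (-1) (by norm_num)).le
              _ ≤ F (t₂ * φ x) := h5
        have hdiv : θ / t₂ * (c * (t₂ * a) ^ θ) ≤ θ / t₂ * F (t₂ * φ x) :=
          mul_le_mul_of_nonneg_left hFlow (by positivity)
        have hfin : θ / t₂ * F (t₂ * φ x) ≤ f (t₂ * φ x) * φ x := by
          rw [div_mul_eq_mul_div, div_le_iff₀ ht₂0]
          calc θ * F (t₂ * φ x) ≤ f (t₂ * φ x) * (t₂ * φ x) := h2
            _ = f (t₂ * φ x) * φ x * t₂ := by ring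
        linarith
      · rw [Set.indicator_of_notMem hx]
        rcases eq_or_ne (φ x) 0 with h0 | h0
        · simp [h0, hf0]
        · have htφ : t₂ * φ x ≠ 0 := mul_ne_zero ht₂0.ne' h0
          have h1 := (hf2 _ htφ).1
          have h2 := (hf2 _ htφ).2
          have h3 : 0 < f (t₂ * φ x) * (t₂ * φ x) := lt_of_lt_of_le h1 h2
          have h4 : f (t₂ * φ x) * (t₂ * φ x) = f (t₂ * φ x) * φ x * t₂ := by ring
          rw [h4] at h3
          have h5 := div_pos h3 ht₂0
          rw [mul_div_assoc, div_self ht₂0.ne', mul_one] at h5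
          exact h5.le
    have hindS : Integrable (S.indicator fun _ => θ / t₂ * (c * (t₂ * a) ^ θ)) :=
      (integrable_indicator_iff hSm).mpr ((integrableOn_const_iff).mpr (Or.inr hSfin))
    have hint : (∫ x, S.indicator (fun _ => θ / t₂ * (c * (t₂ * a) ^ θ)) x) ≤ I t₂ :=
      integral_mono hindS (hIint t₂) hlow
    rw [integral_indicator_const _ hSm, smul_eq_mul] at hint
    change m * _ ≤ I t₂ at hint
    have he3 : (t₂ * a) ^ θ = t₂ ^ θ * a ^ θ := Real.mul_rpow ht₂0.le hapos.le
    have he5 : t₂ ^ (p - 1) * t₂ ^ (θ - p) * t₂ = t₂ ^ θ := by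
      rw [← Real.rpow_add ht₂0, ← Real.rpow_add_one ht₂0.ne']
      norm_num
    have hkey : m * (θ / t₂ * (c * (t₂ * a) ^ θ))
        = t₂ ^ (p - 1) * (Econ * t₂ ^ (θ - p)) := by
      rw [he3, hEdef, ← he5]
      field_simp
    rw [hkey] at hint
    calc t₂ ^ (p - 1) * A < t₂ ^ (p - 1) * (Econ * t₂ ^ (θ - p)) :=
        mul_lt_mul_of_pos_left ht₂gt (Real.rpow_pos_of_pos ht₂0 _)
      _ ≤ I t₂ := hint
  -- intermediate value theorem
  have h12 : t₁ ≤ t₂ := le_trans ht₁1.le ht₂1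
  set h : ℝ → ℝ := fun t => t ^ (p - 1) * A - I t with hhdef
  have hhc : ContinuousOn h (Set.Icc t₁ t₂) := by
    apply ContinuousOn.sub ?_ hIcont.continuousOn
    apply ContinuousOn.mul ?_ continuousOn_const
    intro t ht
    have ht0 : t ≠ 0 := (lt_of_lt_of_le ht₁pos ht.1).ne'
    exact (Real.continuousAt_rpow_const t _ (Or.inl ht0)).continuousWithinAt
  have hmem : (0:ℝ) ∈ Set.Icc (h t₂) (h t₁) := by
    constructor
    · simp only [hhdef]; linarith
    · simp only [hhdef]; linarith
  obtain ⟨tp, htp, hval⟩ := intermediate_value_Icc' h12 hhc hmem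
  refine ⟨tp, lt_of_lt_of_le ht₁pos htp.1, ?_⟩
  have : tp ^ (p - 1) * A - I tp = 0 := hval
  simp only [hIdef, hAdef] at this ⊢
  linarith
end

section
/- Let N ≥ 1, let φ : ℝ^N → ℝ be a continuously differentiable function with compact support which is not identically zero, and let f : ℝ → ℝ be continuous satisfying (f1) and (f2). Then there exist p₁ ∈ (1, min(p₀, θ)) and M > 0 such that for every p ∈ (1, p₁] there is t > 0 with t^{p−1} ∫_{ℝ^N} ‖∇φ(x)‖^p dx = ∫_{ℝ^N} f(t·φ(x))·φ(x) dx and (t^p/p) ∫_{ℝ^N} ‖∇φ(x)‖^p dx − ∫_{ℝ^N} F(t·φ(x)) dx ≤ M. In particular, the p-energy of the Nehari rescaling of φ is bounded above uniformly for p close to 1. -/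
open MeasureTheory Filter Real Set

private lemma bound_of_cs {E : Type*} [TopologicalSpace E] {φ : E → ℝ} (hc : Continuous φ)
    (hs : HasCompactSupport φ) : ∃ C : ℝ, 0 < C ∧ ∀ x, |φ x| ≤ C := by
  obtain ⟨C, hC⟩ := hs.exists_bound_of_continuousOn hc.continuousOn
  refine ⟨max C 0 + 1, by positivity, fun x => ?_⟩
  by_cases hx : x ∈ tsupport φ
  · calc |φ x| = ‖φ x‖ := rfl
      _ ≤ C := hC x hx
      _ ≤ max C 0 + 1 := by linarith [le_max_left C 0]
  · simp [image_eq_zero_of_notMem_tsupport hx]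
    positivity

private lemma f_zero {f : ℝ → ℝ} (hf : Continuous f) {p₀ : ℝ} (hp₀1 : 1 < p₀)
    (hf1 : Tendsto (fun t : ℝ => f t / |t| ^ (p₀ - 1)) (nhdsWithin 0 {0}ᶜ) (nhds 0)) :
    f 0 = 0 := by
  have hpow : Tendsto (fun t : ℝ => |t| ^ (p₀ - 1)) (nhdsWithin 0 {0}ᶜ) (nhds 0) := by
    have hc : Continuous fun t : ℝ => |t| ^ (p₀ - 1) :=
      continuous_abs.rpow_const (fun x => Or.inr (by linarith))
    have h0 : (|(0:ℝ)| : ℝ) ^ (p₀ - 1) = 0 := by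
      rw [abs_zero, Real.zero_rpow (by linarith)]
    have := hc.tendsto 0
    rw [h0] at this
    exact this.mono_left nhdsWithin_le_nhds
  have h2 : Tendsto f (nhdsWithin 0 {0}ᶜ) (nhds 0) := by
    have hmul := hf1.mul hpow
    rw [zero_mul] at hmul
    refine hmul.congr' ?_
    filter_upwards [self_mem_nhdsWithin] with t ht
    have ht0 : |t| ^ (p₀ - 1) ≠ 0 := by
      have : t ≠ 0 := ht
      positivity
    field_simp
  have h3 : Tendsto f (nhdsWithin 0 {0}ᶜ) (nhds (f 0)) :=
    (hf.tendsto 0).mono_left nhdsWithin_le_nhds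
  exact tendsto_nhds_unique h3 h2

private lemma f_small {f : ℝ → ℝ} (hf : Continuous f) {p₀ : ℝ} (hp₀1 : 1 < p₀)
    (hf1 : Tendsto (fun t : ℝ => f t / |t| ^ (p₀ - 1)) (nhdsWithin 0 {0}ᶜ) (nhds 0)) :
    ∃ δ > (0:ℝ), ∀ s : ℝ, |s| < δ → |f s| ≤ |s| ^ (p₀ - 1) := by
  obtain ⟨δ, hδ, h⟩ := Metric.tendsto_nhdsWithin_nhds.1 hf1 1 one_pos
  refine ⟨δ, hδ, fun s hs => ?_⟩
  rcases eq_or_ne s 0 with rfl | h0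
  · simp [f_zero hf hp₀1 hf1, Real.zero_rpow (by linarith : p₀ - 1 ≠ 0)]
  · have := h (x := s) h0 (by simpa [Real.dist_eq] using hs)
    rw [Real.dist_eq, sub_zero, abs_div, abs_of_nonneg (Real.rpow_nonneg (abs_nonneg s) _)] at this
    have hp : (0:ℝ) < |s| ^ (p₀ - 1) := by positivity
    rw [div_lt_one hp] at this
    exact this.le

private lemma F_hasDerivAt {f : ℝ → ℝ} (hf : Continuous f) (t : ℝ) :
    HasDerivAt (fun u => ∫ s in (0:ℝ)..u, f s) (f t) t :=
  intervalIntegral.integral_hasDerivAt_right (hf.intervalIntegrable _ _)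
    (hf.stronglyMeasurableAtFilter _ _) hf.continuousAt

private lemma F_continuous {f : ℝ → ℝ} (hf : Continuous f) :
    Continuous (fun u => ∫ s in (0:ℝ)..u, f s) :=
  continuous_iff_continuousAt.2 fun t => (F_hasDerivAt hf t).continuousAt

private lemma F_nonneg {f : ℝ → ℝ} {θ : ℝ} (hθ : 1 < θ)
    (hf2 : ∀ t : ℝ, t ≠ 0 →
      0 < θ * (∫ s in (0:ℝ)..t, f s) ∧ θ * (∫ s in (0:ℝ)..t, f s) ≤ f t * t) :
    ∀ s : ℝ, 0 ≤ ∫ u in (0:ℝ)..s, f u := by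
  intro s
  rcases eq_or_ne s 0 with rfl | h
  · simp
  · have h1 := (hf2 s h).1
    nlinarith

private lemma F_growth_pos {f : ℝ → ℝ} (hf : Continuous f) {θ : ℝ} (hθ : 1 < θ)
    (hf2 : ∀ t : ℝ, t ≠ 0 →
      0 < θ * (∫ s in (0:ℝ)..t, f s) ∧ θ * (∫ s in (0:ℝ)..t, f s) ≤ f t * t) :
    ∀ s : ℝ, 1 ≤ s → (∫ u in (0:ℝ)..(1:ℝ), f u) * s ^ θ ≤ ∫ u in (0:ℝ)..s, f u := by
  intro s hs
  set F : ℝ → ℝ := fun u => ∫ v in (0:ℝ)..u, f v with hF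
  set G : ℝ → ℝ := fun u => F u / u ^ θ with hGdef
  have hG : ∀ x : ℝ, 0 < x → HasDerivAt G
      ((f x * x ^ θ - F x * (θ * x ^ (θ - 1))) / (x ^ θ) ^ 2) x := by
    intro x hx
    exact (F_hasDerivAt hf x).div (Real.hasDerivAt_rpow_const (Or.inl hx.ne'))
      ((Real.rpow_pos_of_pos hx θ).ne')
  have hmono : MonotoneOn G (Ici (1:ℝ)) := by
    apply monotoneOn_of_deriv_nonneg (convex_Ici 1)
    · intro x hx
      have hx1 : (0:ℝ) < x := lt_of_lt_of_le one_pos hx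
      exact (hG x hx1).continuousAt.continuousWithinAt
    · intro x hx
      rw [interior_Ici] at hx
      exact (hG x (lt_trans one_pos hx)).differentiableAt.differentiableWithinAt
    · intro x hx
      rw [interior_Ici] at hx
      have hx0 : (0:ℝ) < x := lt_trans one_pos hx
      rw [(hG x hx0).deriv]
      apply div_nonneg _ (sq_nonneg _)
      have hsplit : x ^ θ = x ^ (θ - 1) * x := by
        rw [← Real.rpow_add_one hx0.ne' (θ - 1)]; ring_nf
      have h2 := (hf2 x hx0.ne').2
      have hxp : (0:ℝ) ≤ x ^ (θ - 1) := Real.rpow_nonneg hx0.le _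
      rw [hsplit]; nlinarith
  have h1 : G 1 ≤ G s := hmono (by norm_num) hs hs
  have hsp : (0:ℝ) < s ^ θ := Real.rpow_pos_of_pos (lt_of_lt_of_le one_pos hs) θ
  have hG1 : G 1 = F 1 := by simp [hGdef, Real.one_rpow]
  rw [hG1, hGdef] at h1
  calc F 1 * s ^ θ ≤ (F s / s ^ θ) * s ^ θ := by
        apply mul_le_mul_of_nonneg_right h1 hsp.le
    _ = F s := by field_simp

private lemma F_growth_neg {f : ℝ → ℝ} (hf : Continuous f) {θ : ℝ} (hθ : 1 < θ)
    (hf2 : ∀ t : ℝ, t ≠ 0 →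
      0 < θ * (∫ s in (0:ℝ)..t, f s) ∧ θ * (∫ s in (0:ℝ)..t, f s) ≤ f t * t) :
    ∀ s : ℝ, s ≤ -1 → (∫ u in (0:ℝ)..(-1:ℝ), f u) * (-s) ^ θ ≤ ∫ u in (0:ℝ)..s, f u := by
  intro s hs
  set F : ℝ → ℝ := fun u => ∫ v in (0:ℝ)..u, f v with hF
  set G : ℝ → ℝ := fun u => F u / (-u) ^ θ with hGdef
  have hG : ∀ x : ℝ, x < 0 → HasDerivAt G
      ((f x * (-x) ^ θ - F x * (θ * (-x) ^ (θ - 1) * (-1))) / ((-x) ^ θ) ^ 2) x := by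
    intro x hx
    have hpow : HasDerivAt (fun u : ℝ => (-u) ^ θ) (θ * (-x) ^ (θ - 1) * (-1)) x := by
      have h1 : HasDerivAt (fun u : ℝ => -u) (-1) x := (hasDerivAt_id x).neg
      exact (Real.hasDerivAt_rpow_const (p := θ)
        (Or.inl (neg_pos.2 hx).ne')).comp x h1
    exact (F_hasDerivAt hf x).div hpow ((Real.rpow_pos_of_pos (neg_pos.2 hx) θ).ne')
  have hanti : AntitoneOn G (Iic (-1:ℝ)) := by
    apply antitoneOn_of_deriv_nonpos (convex_Iic (-1))
    · intro x hx
      have hx1 : x < 0 := lt_of_le_of_lt hx (by norm_num)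
      exact (hG x hx1).continuousAt.continuousWithinAt
    · intro x hx
      rw [interior_Iic] at hx
      exact (hG x (lt_trans hx (by norm_num))).differentiableAt.differentiableWithinAt
    · intro x hx
      rw [interior_Iic] at hx
      have hx0 : x < 0 := lt_trans hx (by norm_num)
      have hnx : (0:ℝ) < -x := neg_pos.2 hx0
      rw [(hG x hx0).deriv]
      apply div_nonpos_of_nonpos_of_nonneg _ (sq_nonneg _)
      have hsplit : (-x) ^ θ = (-x) ^ (θ - 1) * (-x) := by
        rw [← Real.rpow_add_one hnx.ne' (θ - 1)]; ring_nf
      have h2 := (hf2 x hx0.ne).2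
      have hxp : (0:ℝ) ≤ (-x) ^ (θ - 1) := Real.rpow_nonneg hnx.le _
      rw [hsplit]; nlinarith
  have h1 : G (-1) ≤ G s := hanti hs (by norm_num) hs
  have hsp : (0:ℝ) < (-s) ^ θ :=
    Real.rpow_pos_of_pos (by linarith : (0:ℝ) < -s) θ
  have hG1 : G (-1) = F (-1) := by simp [hGdef, Real.one_rpow]
  rw [hG1, hGdef] at h1
  calc F (-1) * (-s) ^ θ ≤ (F s / (-s) ^ θ) * (-s) ^ θ := by
        apply mul_le_mul_of_nonneg_right h1 hsp.le
    _ = F s := by field_simp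

set_option maxHeartbeats 2000000 in
/-- There are `p₁ ∈ (1, min p₀ θ)` and `M > 0` such that for every `p ∈ (1, p₁]` the
Nehari rescaling of `φ` exists and its `p`-energy is bounded by `M`. -/
theorem nehari_energy_bounded (N : ℕ) (hN : 1 ≤ N)
    (φ : EuclideanSpace ℝ (Fin N) → ℝ)
    (hφ : ContDiff ℝ 1 φ) (hφc : HasCompactSupport φ) (hφ0 : φ ≠ 0)
    (f : ℝ → ℝ) (hf : Continuous f)
    (p₀ : ℝ) (hp₀1 : 1 < p₀) (hp₀2 : p₀ < 2)
    (hf1 : Tendsto (fun t : ℝ => f t / |t| ^ (p₀ - 1)) (nhdsWithin 0 {0}ᶜ) (nhds 0))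
    (θ : ℝ) (hθ : 1 < θ)
    (hf2 : ∀ t : ℝ, t ≠ 0 →
      0 < θ * (∫ s in (0:ℝ)..t, f s) ∧ θ * (∫ s in (0:ℝ)..t, f s) ≤ f t * t) :
    ∃ p₁ M : ℝ, 1 < p₁ ∧ p₁ < min p₀ θ ∧ 0 < M ∧
      ∀ p : ℝ, 1 < p → p ≤ p₁ →
        ∃ t : ℝ, 0 < t ∧
          t ^ (p - 1) * (∫ x, ‖gradient φ x‖ ^ p) = (∫ x, f (t * φ x) * φ x) ∧
          t ^ p / p * (∫ x, ‖gradient φ x‖ ^ p)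
            - (∫ x, (∫ s in (0:ℝ)..(t * φ x), f s)) ≤ M := by
  classical
  have hθ0 : (0:ℝ) < θ := by linarith
  have hφcont : Continuous φ := hφ.continuous
  have hgc : Continuous (gradient φ) := by
    have h1 : Continuous (fderiv ℝ φ) := hφ.continuous_fderiv (by simp)
    exact ((InnerProductSpace.toDual ℝ _).symm.continuous).comp h1
  have hgs : HasCompactSupport (gradient φ) := by
    have h1 : HasCompactSupport (fderiv ℝ φ) := hφc.fderiv (𝕜 := ℝ)
    exact h1.comp_left (map_zero _)
  have hgx : ∃ x, gradient φ x ≠ 0 := by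
    by_contra hcon
    push_neg at hcon
    have hfd : ∀ x, fderiv ℝ φ x = 0 := by
      intro x
      have := hcon x
      unfold gradient at this
      simpa using this
    have hconst : ∀ x y, φ x = φ y := fun x y =>
      is_const_of_fderiv_eq_zero (hφ.differentiable (by simp)) hfd x y
    have : Nontrivial (EuclideanSpace ℝ (Fin N)) := by
      refine ⟨0, EuclideanSpace.single ⟨0, by omega⟩ 1, fun h => ?_⟩
      have := congrArg (fun v => v ⟨0, by omega⟩) h
      simp [EuclideanSpace.single_apply] at this
    have hne : tsupport φ ≠ univ := hφc.ne_univ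
    obtain ⟨z, hz⟩ : ∃ z, z ∉ tsupport φ := by
      by_contra hcc; push_neg at hcc
      exact hne (eq_univ_of_forall hcc)
    have hz0 : φ z = 0 := image_eq_zero_of_notMem_tsupport hz
    apply hφ0
    funext y
    rw [hconst y z, hz0]; rfl
  obtain ⟨Cφ, hCφ0, hCφ⟩ := bound_of_cs hφcont hφc
  have hVfin : volume (tsupport φ) ≠ ⊤ := hφc.isCompact.measure_lt_top.ne
  set V := (volume (tsupport φ)).toReal with hV
  have hV0 : 0 ≤ V := ENNReal.toReal_nonneg
  obtain ⟨x₀, δ, r, hδ0, hr0, hsign⟩ :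
      ∃ (x₀ : EuclideanSpace ℝ (Fin N)) (δ r : ℝ), 0 < δ ∧ 0 < r ∧
        ((∀ x ∈ Metric.ball x₀ r, δ ≤ φ x) ∨ (∀ x ∈ Metric.ball x₀ r, φ x ≤ -δ)) := by
    obtain ⟨y, hy⟩ := Function.ne_iff.1 hφ0
    have hy0 : φ y ≠ 0 := hy
    have hδ0 : (0:ℝ) < |φ y| / 2 := by positivity
    obtain ⟨r, hr0, hr⟩ := Metric.continuousAt_iff.1 hφcont.continuousAt (|φ y| / 2) hδ0
    refine ⟨y, |φ y| / 2, r, hδ0, hr0, ?_⟩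
    rcases lt_or_gt_of_ne hy0 with hneg | hpos
    · right
      intro x hx
      have := hr (Metric.mem_ball.1 hx)
      rw [Real.dist_eq] at this
      rw [abs_of_neg hneg] at *
      have := abs_lt.1 this
      linarith [this.2]
    · left
      intro x hx
      have := hr (Metric.mem_ball.1 hx)
      rw [Real.dist_eq] at this
      rw [abs_of_pos hpos] at *
      have := abs_lt.1 this
      linarith [this.1]
  set m0 := (volume (Metric.ball x₀ r)).toReal with hm0def
  have hm00 : 0 < m0 := by
    rw [hm0def]
    exact ENNReal.toReal_pos (Metric.measure_ball_pos volume x₀ hr0).ne'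
      measure_ball_lt_top.ne
  obtain ⟨c, hc0, hclow⟩ : ∃ c > (0:ℝ), ∀ t : ℝ, 1/δ ≤ t → ∀ x ∈ Metric.ball x₀ r,
      c * t ^ θ ≤ ∫ s in (0:ℝ)..(t * φ x), f s := by
    have hθ0' : (0:ℝ) ≤ θ := hθ0.le
    rcases hsign with hpos | hneg
    · have hF1 : (0:ℝ) < ∫ u in (0:ℝ)..(1:ℝ), f u := by
        have := (hf2 1 one_ne_zero).1; nlinarith
      refine ⟨(∫ u in (0:ℝ)..(1:ℝ), f u) * δ ^ θ, by positivity, fun t ht x hx => ?_⟩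
      have htp : 0 < t := lt_of_lt_of_le (by positivity) ht
      have hφx : δ ≤ φ x := hpos x hx
      have htδ : 1 ≤ t * δ := by
        rw [div_le_iff₀ hδ0] at ht
        linarith
      have h1 : 1 ≤ t * φ x := le_trans htδ (by nlinarith)
      have hgr := F_growth_pos hf hθ hf2 (t * φ x) h1
      have h2 : (t * δ) ^ θ ≤ (t * φ x) ^ θ :=
        Real.rpow_le_rpow (by positivity) (by nlinarith) hθ0'
      have h3 : (t * δ) ^ θ = t ^ θ * δ ^ θ := Real.mul_rpow htp.le hδ0.le
      calc (∫ u in (0:ℝ)..(1:ℝ), f u) * δ ^ θ * t ^ θ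
          = (∫ u in (0:ℝ)..(1:ℝ), f u) * ((t * δ) ^ θ) := by rw [h3]; ring
        _ ≤ (∫ u in (0:ℝ)..(1:ℝ), f u) * ((t * φ x) ^ θ) := by nlinarith
        _ ≤ _ := by rw [mul_comm] at hgr ⊢; exact hgr
    · have hF1 : (0:ℝ) < ∫ u in (0:ℝ)..(-1:ℝ), f u := by
        have := (hf2 (-1) (by norm_num)).1; nlinarith
      refine ⟨(∫ u in (0:ℝ)..(-1:ℝ), f u) * δ ^ θ, by positivity, fun t ht x hx => ?_⟩
      have htp : 0 < t := lt_of_lt_of_le (by positivity) ht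
      have hφx : φ x ≤ -δ := hneg x hx
      have htδ : 1 ≤ t * δ := by
        rw [div_le_iff₀ hδ0] at ht
        linarith
      have h1 : t * φ x ≤ -1 := by nlinarith
      have hgr := F_growth_neg hf hθ hf2 (t * φ x) h1
      have h2 : (t * δ) ^ θ ≤ (-(t * φ x)) ^ θ :=
        Real.rpow_le_rpow (by positivity) (by nlinarith) hθ0'
      have h3 : (t * δ) ^ θ = t ^ θ * δ ^ θ := Real.mul_rpow htp.le hδ0.le
      calc (∫ u in (0:ℝ)..(-1:ℝ), f u) * δ ^ θ * t ^ θ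
          = (∫ u in (0:ℝ)..(-1:ℝ), f u) * ((t * δ) ^ θ) := by rw [h3]; ring
        _ ≤ (∫ u in (0:ℝ)..(-1:ℝ), f u) * ((-(t * φ x)) ^ θ) := by nlinarith
        _ ≤ _ := hgr
  set p₁ := (1 + min p₀ θ)/2 with hp₁def
  have hminp : 1 < min p₀ θ := lt_min hp₀1 hθ
  have hp₁1 : 1 < p₁ := by rw [hp₁def]; linarith
  have hp₁min : p₁ < min p₀ θ := by rw [hp₁def]; linarith
  have hp₁p₀ : p₁ < p₀ := lt_of_lt_of_le hp₁min (min_le_left _ _)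
  have hp₁θ : p₁ < θ := lt_of_lt_of_le hp₁min (min_le_right _ _)
  have hp₁0 : (0:ℝ) < p₁ := by linarith
  have hAmaxInt : Integrable (fun x => ‖gradient φ x‖ + ‖gradient φ x‖ ^ p₁) := by
    apply Integrable.add
    · exact hgc.norm.integrable_of_hasCompactSupport hgs.norm
    · exact (hgc.norm.rpow_const (fun x => Or.inr hp₁0.le)).integrable_of_hasCompactSupport
        (hgs.norm.comp_left (g := fun s : ℝ => s ^ p₁) (Real.zero_rpow hp₁0.ne'))
  set Amax := ∫ x, (‖gradient φ x‖ + ‖gradient φ x‖ ^ p₁) with hAmaxdef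
  have hAmax0 : 0 ≤ Amax := by
    apply integral_nonneg; intro x; positivity
  set T := max (1/δ) (max 1 ((Amax/(θ*c*m0)+1) ^ (θ - p₁)⁻¹)) with hTdef
  have hT1 : (1:ℝ) ≤ T := le_trans (le_max_left 1 _) (le_max_right _ _)
  have hTp₁ : (0:ℝ) ≤ T ^ p₁ := Real.rpow_nonneg (le_trans zero_le_one hT1) p₁
  refine ⟨p₁, T ^ p₁ * Amax + 1, hp₁1, hp₁min, by nlinarith, ?_⟩
  intro p hp1 hpp₁
  have hp0 : (0:ℝ) < p := by linarith
  have hgpc : Continuous (fun x => ‖gradient φ x‖ ^ p) :=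
    hgc.norm.rpow_const (fun x => Or.inr hp0.le)
  have hgps : HasCompactSupport (fun x => ‖gradient φ x‖ ^ p) := by
    have h1 : HasCompactSupport (fun x => ‖gradient φ x‖) := hgs.norm
    exact h1.comp_left (g := fun s : ℝ => s ^ p) (Real.zero_rpow hp0.ne')
  have hApInt : Integrable (fun x => ‖gradient φ x‖ ^ p) :=
    hgpc.integrable_of_hasCompactSupport hgps
  set A := ∫ x, ‖gradient φ x‖ ^ p with hA
  have hApos : 0 < A := by
    rw [hA]
    have hnn : 0 ≤ᵐ[volume] (fun x => ‖gradient φ x‖ ^ p) :=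
      ae_of_all _ fun x => Real.rpow_nonneg (norm_nonneg _) p
    rw [integral_pos_iff_support_of_nonneg_ae hnn hApInt]
    obtain ⟨x₁, hx₁⟩ := hgx
    have hopen : IsOpen {x | gradient φ x ≠ 0} :=
      isOpen_compl_singleton.preimage hgc
    have hsub : {x | gradient φ x ≠ 0} ⊆ Function.support (fun x => ‖gradient φ x‖ ^ p) := by
      intro x hx
      have : (0:ℝ) < ‖gradient φ x‖ ^ p :=
        Real.rpow_pos_of_pos (norm_pos_iff.2 hx) p
      exact this.ne'
    exact lt_of_lt_of_le (hopen.measure_pos volume ⟨x₁, hx₁⟩) (measure_mono hsub)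
  have hAle : A ≤ Amax := by
    rw [hA, hAmaxdef]
    apply integral_mono hApInt hAmaxInt
    intro x
    have ha0 : (0:ℝ) ≤ ‖gradient φ x‖ := norm_nonneg _
    rcases le_or_gt ‖gradient φ x‖ 1 with h1 | h1
    · rcases eq_or_lt_of_le ha0 with h0 | h0
      · simp only [← h0, Real.zero_rpow hp0.ne', Real.zero_rpow hp₁0.ne']
        norm_num
      · have h2 : ‖gradient φ x‖ ^ p ≤ ‖gradient φ x‖ ^ (1:ℝ) :=
          Real.rpow_le_rpow_of_exponent_ge h0 h1 (by linarith)
        rw [Real.rpow_one] at h2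
        have h3 : (0:ℝ) ≤ ‖gradient φ x‖ ^ p₁ := Real.rpow_nonneg ha0 _
        simp only []
        linarith
    · have h2 : ‖gradient φ x‖ ^ p ≤ ‖gradient φ x‖ ^ p₁ :=
        Real.rpow_le_rpow_of_exponent_le h1.le hpp₁
      simp only []
      linarith
  set Φ : ℝ → ℝ := fun t => ∫ x, f (t * φ x) * φ x with hΦ
  have hΦc : Continuous Φ := by
    rw [continuous_iff_continuousAt]
    intro t₀
    obtain ⟨Cf, hCf⟩ := isCompact_Icc.exists_bound_of_continuousOn
      (s := Icc (-((|t₀|+1)*Cφ)) ((|t₀|+1)*Cφ)) hf.continuousOn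
    apply continuousAt_of_dominated (bound := (tsupport φ).indicator (fun _ => Cf * Cφ))
    · exact Eventually.of_forall fun t =>
        ((hf.comp (continuous_const.mul hφcont)).mul hφcont).aestronglyMeasurable
    · filter_upwards [Metric.ball_mem_nhds t₀ one_pos] with t ht
      apply ae_of_all
      intro x
      by_cases hx : x ∈ tsupport φ
      · rw [indicator_of_mem hx]
        have htb : |t| ≤ |t₀| + 1 := by
          have := Metric.mem_ball.1 ht
          rw [Real.dist_eq] at this
          calc |t| = |t₀ + (t - t₀)| := by ring_nf
            _ ≤ |t₀| + |t - t₀| := abs_add_le _ _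
            _ ≤ |t₀| + 1 := by linarith
        have hmem : t * φ x ∈ Icc (-((|t₀|+1)*Cφ)) ((|t₀|+1)*Cφ) := by
          rw [mem_Icc, ← abs_le, abs_mul]
          exact mul_le_mul htb (hCφ x) (abs_nonneg _) (by positivity)
        have h1 : |f (t * φ x)| ≤ Cf := hCf _ hmem
        have hCf0 : (0:ℝ) ≤ Cf := le_trans (abs_nonneg _) h1
        calc ‖f (t * φ x) * φ x‖ = |f (t * φ x)| * |φ x| := abs_mul _ _
          _ ≤ Cf * Cφ := mul_le_mul h1 (hCφ x) (abs_nonneg _) hCf0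
      · rw [indicator_of_notMem hx, image_eq_zero_of_notMem_tsupport hx, mul_zero]
        simp
    · exact (integrable_indicator_iff (isClosed_tsupport φ).measurableSet).2
        (integrableOn_const hφc.isCompact.measure_lt_top.ne)
    · apply ae_of_all
      intro x
      exact ((hf.comp (continuous_mul_right (φ x))).mul continuous_const).continuousAt
  have hint2 : ∀ t : ℝ, Integrable (fun x => ∫ s in (0:ℝ)..(t * φ x), f s) := by
    intro t
    have hc : Continuous (fun x => ∫ s in (0:ℝ)..(t * φ x), f s) :=
      (F_continuous hf).comp (continuous_const.mul hφcont)
    have hs : HasCompactSupport (fun x => t * φ x) := hφc.mul_left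
    exact hc.integrable_of_hasCompactSupport
      (hs.comp_left (g := fun u => ∫ s in (0:ℝ)..u, f s) (intervalIntegral.integral_same))
  have hFnn : ∀ t : ℝ, 0 ≤ ∫ x, ∫ s in (0:ℝ)..(t * φ x), f s := fun t =>
    integral_nonneg (fun x => F_nonneg hθ hf2 _)
  have hkey : ∀ t : ℝ, 0 < t →
      θ * (∫ x, ∫ s in (0:ℝ)..(t * φ x), f s) ≤ t * Φ t := by
    intro t ht
    have hint1 : Integrable (fun x => f (t * φ x) * φ x) :=
      ((hf.comp (continuous_const.mul hφcont)).mul hφcont).integrable_of_hasCompactSupport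
        hφc.mul_left
    have h1 : t * Φ t = ∫ x, f (t * φ x) * (t * φ x) := by
      rw [hΦ, ← integral_const_mul]
      apply integral_congr_ae
      apply ae_of_all
      intro x
      ring
    rw [h1, ← integral_const_mul]
    apply integral_mono ((hint2 t).const_mul θ) _ _
    · exact (((hf.comp (continuous_const.mul hφcont)).mul
        (continuous_const.mul hφcont))).integrable_of_hasCompactSupport
        (HasCompactSupport.mul_left hφc.mul_left)
    · intro x
      rcases eq_or_ne (φ x) 0 with h | h
      · simp [h]
      · exact (hf2 (t * φ x) (mul_ne_zero ht.ne' h)).2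
  have hlow : ∀ t : ℝ, 1/δ ≤ t →
      c * m0 * t ^ θ ≤ ∫ x, ∫ s in (0:ℝ)..(t * φ x), f s := by
    intro t ht
    have h1 : ∫ x in Metric.ball x₀ r, (c * t ^ θ) ∂volume
        ≤ ∫ x in Metric.ball x₀ r, (∫ s in (0:ℝ)..(t * φ x), f s) ∂volume := by
      apply setIntegral_mono_on
      · exact integrableOn_const measure_ball_lt_top.ne
      · exact (hint2 t).integrableOn
      · exact measurableSet_ball
      · exact hclow t ht
    have h2 : ∫ x in Metric.ball x₀ r, (c * t ^ θ) ∂volume = m0 * (c * t ^ θ) := by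
      rw [setIntegral_const, smul_eq_mul]; rfl
    have h3 : ∫ x in Metric.ball x₀ r, (∫ s in (0:ℝ)..(t * φ x), f s) ∂volume
        ≤ ∫ x, ∫ s in (0:ℝ)..(t * φ x), f s :=
      setIntegral_le_integral (hint2 t) (ae_of_all _ fun x => F_nonneg hθ hf2 _)
    calc c * m0 * t ^ θ = m0 * (c * t ^ θ) := by ring
      _ ≤ _ := by rw [← h2] at *; linarith
  obtain ⟨ts, hts0, hts1, htsg⟩ : ∃ ts : ℝ, 0 < ts ∧ ts ≤ 1 ∧ Φ ts < ts ^ (p - 1) * A := by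
    obtain ⟨δ₀, hδ₀, hsm⟩ := f_small hf hp₀1 hf1
    set B0 := Cφ ^ (p₀ - 1) * Cφ * V with hB0
    have hB00 : 0 ≤ B0 := by positivity
    set B := B0 + 1 with hB
    have hBp : 0 < B := by linarith
    have hpp : 0 < p₀ - p := by linarith [lt_of_le_of_lt hpp₁ hp₁p₀]
    set ts := min (δ₀/(2*Cφ)) (min 1 ((A/(2*B)) ^ (p₀ - p)⁻¹)) with htsdef
    have hts0 : 0 < ts := by
      apply lt_min (by positivity) (lt_min one_pos _)
      exact Real.rpow_pos_of_pos (by positivity) _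
    have hts1 : ts ≤ 1 := le_trans (min_le_right _ _) (min_le_left _ _)
    refine ⟨ts, hts0, hts1, ?_⟩
    have hclose : ∀ x, |ts * φ x| < δ₀ := by
      intro x
      have h1 : ts ≤ δ₀/(2*Cφ) := min_le_left _ _
      rw [abs_mul, abs_of_pos hts0]
      calc ts * |φ x| ≤ (δ₀/(2*Cφ)) * Cφ :=
            mul_le_mul h1 (hCφ x) (abs_nonneg _) (by positivity)
        _ = δ₀/2 := by field_simp
        _ < δ₀ := by linarith
    have hb : ∀ x, ‖f (ts * φ x) * φ x‖
        ≤ (tsupport φ).indicator (fun _ => ts ^ (p₀-1) * Cφ ^ (p₀-1) * Cφ) x := by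
      intro x
      by_cases hx : x ∈ tsupport φ
      · rw [indicator_of_mem hx]
        have h1 : |f (ts * φ x)| ≤ |ts * φ x| ^ (p₀ - 1) := hsm _ (hclose x)
        have h2 : |ts * φ x| ^ (p₀ - 1) ≤ (ts * Cφ) ^ (p₀ - 1) := by
          apply Real.rpow_le_rpow (abs_nonneg _) _ (by linarith)
          rw [abs_mul, abs_of_pos hts0]
          exact mul_le_mul_of_nonneg_left (hCφ x) hts0.le
        have h3 : (ts * Cφ) ^ (p₀ - 1) = ts ^ (p₀-1) * Cφ ^ (p₀-1) :=
          Real.mul_rpow hts0.le hCφ0.le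
        calc ‖f (ts * φ x) * φ x‖ = |f (ts * φ x)| * |φ x| := abs_mul _ _
          _ ≤ (ts ^ (p₀-1) * Cφ ^ (p₀-1)) * Cφ := by
              apply mul_le_mul _ (hCφ x) (abs_nonneg _) (by positivity)
              rw [← h3]; exact le_trans h1 h2
          _ = ts ^ (p₀-1) * Cφ ^ (p₀-1) * Cφ := by ring
      · rw [indicator_of_notMem hx, image_eq_zero_of_notMem_tsupport hx, mul_zero]
        simp
    have hΦb : Φ ts ≤ ts ^ (p₀ - 1) * B0 := by
      have hbi : Integrable ((tsupport φ).indicator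
          (fun _ => ts ^ (p₀-1) * Cφ ^ (p₀-1) * Cφ)) :=
        (integrable_indicator_iff (isClosed_tsupport φ).measurableSet).2
          (integrableOn_const hφc.isCompact.measure_lt_top.ne)
      have hn : ‖Φ ts‖ ≤ ∫ x, (tsupport φ).indicator
          (fun _ => ts ^ (p₀-1) * Cφ ^ (p₀-1) * Cφ) x :=
        norm_integral_le_of_norm_le hbi (ae_of_all _ hb)
      rw [integral_indicator_const _ (isClosed_tsupport φ).measurableSet, smul_eq_mul] at hn
      have : ‖Φ ts‖ ≤ ts ^ (p₀-1) * B0 := by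
        rw [hB0]
        calc ‖Φ ts‖ ≤ (volume (tsupport φ)).toReal * (ts ^ (p₀-1) * Cφ ^ (p₀-1) * Cφ) := hn
          _ = ts ^ (p₀ - 1) * (Cφ ^ (p₀ - 1) * Cφ * V) := by rw [hV]; ring
      exact le_trans (le_abs_self _) this
    have hsplit : ts ^ (p₀ - 1) = ts ^ (p - 1) * ts ^ (p₀ - p) := by
      rw [← Real.rpow_add hts0]; ring_nf
    have hpow : ts ^ (p₀ - p) ≤ A/(2*B) := by
      have h1 : ts ≤ (A/(2*B)) ^ (p₀ - p)⁻¹ := le_trans (min_le_right _ _) (min_le_right _ _)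
      have h2 := Real.rpow_le_rpow hts0.le h1 hpp.le
      rwa [Real.rpow_inv_rpow (by positivity) hpp.ne'] at h2
    have htp : 0 < ts ^ (p-1) := Real.rpow_pos_of_pos hts0 _
    have hq : A/(2*B) * (2*B) = A := by field_simp
    have hqpos : 0 < A/(2*B) := by positivity
    have hlt : ts ^ (p₀-p) * B0 < A := by
      have hx0 : (0:ℝ) ≤ ts ^ (p₀-p) := Real.rpow_nonneg hts0.le _
      nlinarith [hpow, hq, hqpos, hBp, hB00]
    calc Φ ts ≤ ts ^ (p₀-1) * B0 := hΦb
      _ = ts ^ (p-1) * (ts ^ (p₀-p) * B0) := by rw [hsplit]; ring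
      _ < ts ^ (p-1) * A := mul_lt_mul_of_pos_left hlt htp
  obtain ⟨tb, htb1, htbg⟩ : ∃ tb : ℝ, 1 ≤ tb ∧ tb ^ (p-1) * A < Φ tb := by
    set K := A/(θ*c*m0) with hKdef
    have hK0 : 0 < K := by positivity
    have hθp : 0 < θ - p := by linarith [lt_of_le_of_lt hpp₁ hp₁θ]
    set tb := max (1/δ) (max 1 ((K+1) ^ (θ-p)⁻¹)) with htbdef
    have htb1 : 1 ≤ tb := le_trans (le_max_left 1 _) (le_max_right _ _)
    have htb0 : 0 < tb := lt_of_lt_of_le one_pos htb1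
    refine ⟨tb, htb1, ?_⟩
    have l1 := hlow tb (le_max_left _ _)
    have l2 := hkey tb htb0
    have hpow : K + 1 ≤ tb ^ (θ-p) := by
      have h1 : (K+1) ^ (θ-p)⁻¹ ≤ tb := le_trans (le_max_right _ _) (le_max_right _ _)
      have h2 := Real.rpow_le_rpow (by positivity) h1 hθp.le
      rwa [Real.rpow_inv_rpow (by positivity) hθp.ne'] at h2
    have hsplit : tb ^ θ = tb ^ p * tb ^ (θ-p) := by rw [← Real.rpow_add htb0]; ring_nf
    have hq : K * (θ*c*m0) = A := by rw [hKdef]; field_simp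
    have htbp : 0 < tb ^ p := Real.rpow_pos_of_pos htb0 _
    have hcm : 0 < θ*c*m0 := by positivity
    have hmain : tb ^ p * A < θ * (c * m0 * tb ^ θ) := by
      rw [hsplit]
      have h6 : θ*c*m0*tb^p*(K+1) ≤ θ*c*m0*tb^p*(tb^(θ-p)) :=
        mul_le_mul_of_nonneg_left hpow (by positivity)
      nlinarith [h6, htbp, hcm]
    have h4 : tb * (tb ^ (p-1) * A) < tb * Φ tb := by
      have h5 : tb ^ p = tb ^ (p-1) * tb := by
        rw [← Real.rpow_add_one htb0.ne' (p-1)]; ring_nf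
      have h7 : θ * (c*m0*tb^θ) ≤ tb * Φ tb := by nlinarith [l1, l2, hθ0]
      calc tb * (tb ^ (p-1) * A) = tb ^ p * A := by rw [h5]; ring
        _ < θ * (c*m0*tb^θ) := hmain
        _ ≤ tb * Φ tb := h7
    exact (mul_lt_mul_iff_right₀ htb0).1 h4
  obtain ⟨t, htmem, hteq⟩ : ∃ t ∈ Icc ts tb, t ^ (p-1) * A - Φ t = 0 := by
    have hab : ts ≤ tb := le_trans hts1 htb1
    have hcont : ContinuousOn (fun t => t ^ (p-1) * A - Φ t) (Icc ts tb) := by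
      apply ContinuousOn.sub _ hΦc.continuousOn
      apply ContinuousOn.mul _ continuousOn_const
      intro u hu
      exact (Real.continuousAt_rpow_const u (p-1)
        (Or.inl (lt_of_lt_of_le hts0 hu.1).ne')).continuousWithinAt
    have h0mem : (0:ℝ) ∈ Icc (tb ^ (p-1) * A - Φ tb) (ts ^ (p-1) * A - Φ ts) :=
      ⟨by linarith, by linarith⟩
    obtain ⟨t, htmem, hteq⟩ := intermediate_value_Icc' hab hcont h0mem
    exact ⟨t, htmem, hteq⟩
  have ht0 : 0 < t := lt_of_lt_of_le hts0 htmem.1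
  have hteq' : t ^ (p-1) * A = Φ t := by linarith
  refine ⟨t, ht0, hteq', ?_⟩
  have htT : t ≤ T := by
    by_contra hcon
    push_neg at hcon
    have ht1 : 1 < t := lt_of_le_of_lt hT1 hcon
    have htδ : 1/δ ≤ t := le_trans (le_max_left _ _) hcon.le
    have l1 := hlow t htδ
    have l2 := hkey t ht0
    have hθp : 0 < θ - p := by linarith [lt_of_le_of_lt hpp₁ hp₁θ]
    have hθp₁ : 0 < θ - p₁ := by linarith
    have htp : 0 < t ^ p := Real.rpow_pos_of_pos ht0 _
    have hcm : 0 < θ*c*m0 := by positivity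
    have heq2 : t ^ p * A = t * Φ t := by
      have h5 : t ^ p = t ^ (p-1) * t := by
        rw [← Real.rpow_add_one ht0.ne' (p-1)]; ring_nf
      rw [h5, ← hteq']; ring
    have h6 : θ * (c*m0*t^θ) ≤ t ^ p * A := by rw [heq2]; nlinarith [l1, l2, hθ0]
    have hsplit : t ^ θ = t ^ p * t ^ (θ-p) := by rw [← Real.rpow_add ht0]; ring_nf
    have h7 : θ*c*m0 * t^(θ-p) ≤ A := by
      rw [hsplit] at h6
      have h8 : (θ*c*m0 * t^(θ-p)) * t^p ≤ A * t^p := by nlinarith [h6]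
      exact le_of_mul_le_mul_right h8 htp
    have hKb : t ^ (θ-p) ≤ Amax/(θ*c*m0) := by
      rw [le_div_iff₀ hcm]
      nlinarith [h7, hAle]
    have hmono : t ^ (θ-p₁) ≤ t ^ (θ-p) :=
      Real.rpow_le_rpow_of_exponent_le ht1.le (by linarith)
    have h8 : t ^ (θ-p₁) ≤ Amax/(θ*c*m0) + 1 := by linarith
    have h9 : t ≤ (Amax/(θ*c*m0)+1) ^ (θ-p₁)⁻¹ := by
      have h10 := Real.rpow_le_rpow (Real.rpow_nonneg ht0.le _) h8
        (inv_nonneg.2 hθp₁.le)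
      rwa [Real.rpow_rpow_inv ht0.le hθp₁.ne'] at h10
    exact absurd (le_trans h9 (le_trans (le_max_right _ _) (le_max_right _ _)))
      (not_le.2 hcon)
  have h1 : 0 ≤ ∫ x, ∫ s in (0:ℝ)..(t * φ x), f s := hFnn t
  have htp : 0 < t ^ p := Real.rpow_pos_of_pos ht0 _
  have h2 : t ^ p / p ≤ t ^ p := div_le_self htp.le (by linarith)
  have h3 : t ^ p ≤ T ^ p := Real.rpow_le_rpow ht0.le htT hp0.le
  have h4 : T ^ p ≤ T ^ p₁ := Real.rpow_le_rpow_of_exponent_le hT1 hpp₁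
  have h5 : t ^ p * A ≤ T ^ p₁ * Amax :=
    mul_le_mul (le_trans h3 h4) hAle hApos.le hTp₁
  have h6 : t ^ p / p * A ≤ t ^ p * A := mul_le_mul_of_nonneg_right h2 hApos.le
  linarith
end

section
/- Let μ be a measure on a measurable space X, let f : ℝ → ℝ be continuous satisfying (f2) with exponent θ > 1, let 1 < p < θ, and let u : X → ℝ be measurable such that x ↦ F(u(x)) and x ↦ f(u(x))·u(x) are integrable. If A is a real number with A ≥ ∫_X f(u(x))·u(x) dμ(x), then A/p − ∫_X F(u(x)) dμ(x) ≥ (1/p − 1/θ)·A. -/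
open MeasureTheory

/-- Potential-well coercivity: under (f2) with `1 < p < θ`, if
`A ≥ ∫ f(u)u` then `A/p - ∫ F(u) ≥ (1/p - 1/θ) A`, where `F(t) = ∫₀^t f`. -/
theorem potential_well_coercivity
    {X : Type*} [MeasurableSpace X] (μ : Measure X)
    (f : ℝ → ℝ) (hf : Continuous f)
    (θ : ℝ) (hθ : 1 < θ)
    (hf2 : ∀ t : ℝ, t ≠ 0 →
      0 < θ * (∫ s in (0:ℝ)..t, f s) ∧ θ * (∫ s in (0:ℝ)..t, f s) ≤ f t * t)
    (p : ℝ) (hp1 : 1 < p) (hpθ : p < θ)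
    (u : X → ℝ)
    (hFint : Integrable (fun x => ∫ s in (0:ℝ)..(u x), f s) μ)
    (hfu : Integrable (fun x => f (u x) * u x) μ)
    (A : ℝ) (hA : (∫ x, f (u x) * u x ∂μ) ≤ A) :
    (1 / p - 1 / θ) * A ≤ A / p - ∫ x, (∫ s in (0:ℝ)..(u x), f s) ∂μ := by
  have hθ0 : (0:ℝ) < θ := lt_trans one_pos hθ
  have hpt : ∀ x, (∫ s in (0:ℝ)..(u x), f s) ≤ f (u x) * u x / θ := by
    intro x
    rcases eq_or_ne (u x) 0 with h | h
    · simp [h]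
    · have := (hf2 (u x) h).2
      rw [le_div_iff₀ hθ0]
      linarith [this]
  have h1 : (∫ x, (∫ s in (0:ℝ)..(u x), f s) ∂μ) ≤ ∫ x, f (u x) * u x / θ ∂μ :=
    integral_mono hFint (hfu.div_const θ) hpt
  have h2 : (∫ x, f (u x) * u x / θ ∂μ) = (∫ x, f (u x) * u x ∂μ) / θ :=
    integral_div θ _
  have h3 : (∫ x, (∫ s in (0:ℝ)..(u x), f s) ∂μ) ≤ A / θ := by
    rw [h2] at h1
    exact h1.trans (div_le_div_of_nonneg_right hA hθ0.le)
  have e1 : A / p = (1/p) * A := by ring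
  have e2 : A / θ = (1/θ) * A := by ring
  linarith
end
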